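/- Let v ∈ ℝ^d_{≥0}, let M be a d×d real matrix with (vM)_m > 0 for every m in the support of v, and let Ξ ⊂ ℝ^d be a finite set such that every ξ ∈ Ξ has support intersecting the support of v. Then there exists a vector v' ∈ ℝ^d_{≥0} such that: (a) (v'M)_m > 0 for each m with v'_m > 0; (b) supp(v') = supp(v); and (c) v'·ξ ≠ 0 for all ξ ∈ Ξ. -/
import Mathlib


open Matrix BigOperators

/-- We may perturb `v` so that it is not orthogonal to any vector in a finite family `Ξ`
whose members all have support intersecting that of `v`. -/
theorem perturb_v_not_orthogonal
    (d : ℕ) (v : Fin d → ℝ) (hv : ∀ i, 0 ≤ v i)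
    (M : Matrix (Fin d) (Fin d) ℝ)
    (hvM : ∀ m, v m ≠ 0 → 0 < (v ᵥ* M) m)
    (Ξ : Finset (Fin d → ℝ))
    (hΞ : ∀ ξ ∈ Ξ, ∃ m, v m ≠ 0 ∧ ξ m ≠ 0) :
    ∃ v' : Fin d → ℝ, (∀ i, 0 ≤ v' i) ∧
      (∀ m, v' m ≠ 0 → 0 < (v' ᵥ* M) m) ∧
      (∀ m, v' m ≠ 0 ↔ v m ≠ 0) ∧
      ∀ ξ ∈ Ξ, v' ⬝ᵥ ξ ≠ 0 := by
  classical
  -- the open "good" set for positivity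
  set g : Fin d → ℝ → ℝ := fun m t => ∑ k, v k * t ^ (k : ℕ) * M k m with hg
  have hgc : ∀ m, Continuous (g m) := by
    intro m
    apply continuous_finset_sum
    intro k _
    continuity
  set S : Set ℝ :=
    Set.Ioi 0 ∩ ⋂ m ∈ Finset.univ.filter (fun m => v m ≠ 0), {t | 0 < g m t} with hS
  have hSopen : IsOpen S := by
    apply IsOpen.inter isOpen_Ioi
    apply isOpen_biInter_finset
    intro m _
    exact isOpen_lt continuous_const (hgc m)
  have h1S : (1 : ℝ) ∈ S := by
    constructor
    · exact Set.mem_Ioi.mpr one_pos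
    · simp only [Set.mem_iInter, Finset.mem_filter, Finset.mem_univ, true_and]
      intro m hm
      have := hvM m hm
      have hgv : g m 1 = (v ᵥ* M) m := by
        simp [hg, Matrix.vecMul, dotProduct]
      rw [Set.mem_setOf_eq, hgv]
      exact this
  -- the polynomials
  set P : (Fin d → ℝ) → Polynomial ℝ :=
    fun ξ => ∑ m, Polynomial.C (v m * ξ m) * Polynomial.X ^ (m : ℕ) with hPdef
  have hPne : ∀ ξ ∈ Ξ, P ξ ≠ 0 := by
    intro ξ hξ
    obtain ⟨m0, hvm0, hξm0⟩ := hΞ ξ hξ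
    intro hP0
    have hcoeff : (P ξ).coeff (m0 : ℕ) = v m0 * ξ m0 := by
      rw [hPdef]
      rw [Polynomial.finset_sum_coeff]
      rw [Finset.sum_eq_single m0]
      · rw [Polynomial.coeff_C_mul, Polynomial.coeff_X_pow, if_pos rfl, mul_one]
      · intro b _ hb
        rw [Polynomial.coeff_C_mul, Polynomial.coeff_X_pow,
          if_neg (show ¬(m0:ℕ) = (b:ℕ) from fun h => hb (Fin.val_injective h).symm), mul_zero]
      · simp
    rw [hP0] at hcoeff
    simp only [Polynomial.coeff_zero] at hcoeff
    exact mul_ne_zero hvm0 hξm0 hcoeff.symm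
  -- the root set
  set R : Set ℝ := ⋃ ξ ∈ Ξ, {t | Polynomial.eval t (P ξ) = 0} with hR
  have hRfin : R.Finite := by
    apply Set.Finite.biUnion Ξ.finite_toSet
    intro ξ hξ
    apply Set.Finite.subset (P ξ).roots.toFinset.finite_toSet
    intro t ht
    simp only [Finset.coe_sort_coe, Multiset.mem_toFinset, Finset.mem_coe,
      Polynomial.mem_roots (hPne ξ hξ)]
    exact ht
  -- S is infinite
  have hSinf : S.Infinite := by
    obtain ⟨ε, hε, hball⟩ := Metric.isOpen_iff.mp hSopen 1 h1S
    have : Set.Ioo (1 - ε) (1 + ε) ⊆ S := by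
      rw [← Real.ball_eq_Ioo]; exact hball
    exact (Set.Ioo_infinite (by linarith)).mono this
  obtain ⟨t, htS, htR⟩ := (hSinf.diff hRfin).nonempty
  have ht0 : 0 < t := htS.1
  have htpow : ∀ m : Fin d, 0 < t ^ (m : ℕ) := fun m => pow_pos ht0 _
  refine ⟨fun m => v m * t ^ (m : ℕ), ?_, ?_, ?_, ?_⟩
  · intro i
    exact mul_nonneg (hv i) (htpow i).le
  · intro m hm
    have hvm : v m ≠ 0 := fun h => hm (by simp [h])
    have := htS.2
    simp only [Set.mem_iInter, Finset.mem_filter, Finset.mem_univ, true_and] at this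
    have hpos := this m hvm
    have : (((fun m => v m * t ^ (m : ℕ)) : Fin d → ℝ) ᵥ* M) m = g m t := by
      simp [hg, Matrix.vecMul, dotProduct]
    rw [this]
    exact hpos
  · intro m
    constructor
    · intro hm h; exact hm (by simp [h])
    · intro hm
      exact mul_ne_zero hm (htpow m).ne'
  · intro ξ hξ
    have heval : (fun m => v m * t ^ (m : ℕ)) ⬝ᵥ ξ = Polynomial.eval t (P ξ) := by
      simp only [hPdef, Polynomial.eval_finset_sum, Polynomial.eval_mul, Polynomial.eval_C,
        Polynomial.eval_pow, Polynomial.eval_X, dotProduct]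
      apply Finset.sum_congr rfl
      intro m _
      ring
    rw [heval]
    intro h
    exact htR (Set.mem_biUnion hξ h)
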